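/- Let n ≥ 1 and let w = c₂e₂ + c₃e₃ + ⋯ + c_{n+2}e_{n+2} be an element of the elementary filiform Lie algebra f_{n+2} with c₂ ≠ 0. Then the Lie subalgebra of f_{n+2} generated by the two elements e₁ and w is all of f_{n+2}. -/

import Mathlib

/-- For `n ≥ 1`, let `L` be the elementary filiform Lie algebra `f_{n+2}` over `ℝ`,
given by a basis `e 0, e 1, …, e (n+1)` (corresponding to `e₁, …, e_{n+2}`) with
`⁅e₁, eᵢ⁆ = (n+2−i) e_{i+1}` for `2 ≤ i ≤ n+1` and all other brackets of basis
elements zero.  If `w = c₂ e₂ + ⋯ + c_{n+2} e_{n+2}` with `c₂ ≠ 0`, then the Lie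
subalgebra generated by `e₁` and `w` is all of `L`. -/
theorem stmt1
    (n : ℕ) (hn : 1 ≤ n)
    (L : Type) [LieRing L] [LieAlgebra ℝ L]
    (e : Fin (n + 2) → L)
    (hindep : LinearIndependent ℝ e)
    (hspan : Submodule.span ℝ (Set.range e) = ⊤)
    (hbr : ∀ j : Fin (n + 2), ∀ _h1 : 1 ≤ (j : ℕ), ∀ _h2 : (j : ℕ) ≤ n,
      ⁅e 0, e j⁆ = ((n + 1 - (j : ℕ) : ℕ) : ℝ) • e ⟨(j : ℕ) + 1, by omega⟩)
    (hlast : ⁅e 0, e ⟨n + 1, by omega⟩⁆ = 0)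
    (hzero : ∀ i j : Fin (n + 2), (i : ℕ) ≠ 0 → (j : ℕ) ≠ 0 → ⁅e i, e j⁆ = 0)
    (c : Fin (n + 2) → ℝ) (hc0 : c 0 = 0) (hc1 : c 1 ≠ 0)
    (w : L) (hw : w = ∑ j : Fin (n + 2), c j • e j) :
    LieSubalgebra.lieSpan ℝ L {e 0, w} = ⊤ := by
  set S := LieSubalgebra.lieSpan ℝ L {e 0, w} with hS
  have he0 : e 0 ∈ S := LieSubalgebra.subset_lieSpan (by simp)
  have hwS : w ∈ S := LieSubalgebra.subset_lieSpan (by simp)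
  -- extended (by zero) versions of the basis and coefficient functions
  set E : ℕ → L := fun i => if h : i < n + 2 then e ⟨i, h⟩ else 0 with hE
  -- Step 1: produce elements of S with leading coefficient at position m
  have key : ∀ m : ℕ, ∀ _h1 : 1 ≤ m, ∀ _h2 : m ≤ n + 1,
      ∃ d : Fin (n + 2) → ℝ, (∀ i : Fin (n + 2), (i : ℕ) < m → d i = 0) ∧
        d ⟨m, by omega⟩ ≠ 0 ∧ (∑ j : Fin (n + 2), d j • e j) ∈ S := by
    intro m
    induction m with
    | zero => intro h; omega
    | succ m ih =>
      intro _ hm1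
      rcases Nat.eq_zero_or_pos m with hm0 | hmpos
      · subst hm0
        refine ⟨c, ?_, ?_, hw ▸ hwS⟩
        · intro i hi
          have hiv : (i : ℕ) = 0 := by omega
          have : i = 0 := by
            apply Fin.ext; simpa using hiv
          rw [this, hc0]
        · have h1 : (⟨1, by omega⟩ : Fin (n + 2)) = 1 := by
            apply Fin.ext; simp [Fin.val_one]
          rw [h1]; exact hc1
      · obtain ⟨d, hd0, hdm, hdS⟩ := ih hmpos (by omega)
        have hmn : m ≤ n := by omega
        set D : ℕ → ℝ := fun j => if h : j < n + 2 then d ⟨j, h⟩ else 0 with hD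
        set d' : Fin (n + 2) → ℝ := fun i =>
          if 1 ≤ (i : ℕ) then ((n + 2 - (i : ℕ) : ℕ) : ℝ) * D ((i : ℕ) - 1) else 0 with hd'
        have hbrv : ⁅e 0, ∑ j : Fin (n + 2), d j • e j⁆ ∈ S := S.lie_mem he0 hdS
        have hcalc : ⁅e 0, ∑ j : Fin (n + 2), d j • e j⁆ = ∑ i : Fin (n + 2), d' i • e i := by
          have hadsum : ⁅e 0, ∑ j : Fin (n + 2), d j • e j⁆ =
              ∑ j : Fin (n + 2), ⁅e 0, d j • e j⁆ := by
            have := map_sum (LieAlgebra.ad ℝ L (e 0)) (fun j => d j • e j) Finset.univ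
            simpa only [LieAlgebra.ad_apply] using this
          rw [hadsum]
          have hL : ∀ j : Fin (n + 2), ⁅e 0, d j • e j⁆ = D (j : ℕ) • ⁅e 0, E (j : ℕ)⁆ := by
            intro j
            rw [lie_smul, hD, hE]
            simp [j.isLt]
          have hR : ∀ i : Fin (n + 2), d' i • e i = d' i • E (i : ℕ) := by
            intro i; rw [hE]; simp [i.isLt]
          calc ∑ j : Fin (n + 2), ⁅e 0, d j • e j⁆
              = ∑ j : Fin (n + 2), D (j : ℕ) • ⁅e 0, E (j : ℕ)⁆ :=
                Finset.sum_congr rfl (fun j _ => hL j)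
            _ = ∑ j ∈ Finset.range (n + 2), D j • ⁅e 0, E j⁆ :=
                Fin.sum_univ_eq_sum_range (fun j => D j • ⁅e 0, E j⁆) (n + 2)
            _ = ∑ j ∈ Finset.range (n + 1), D j • ⁅e 0, E j⁆ := by
                rw [Finset.sum_range_succ]
                have : E (n + 1) = e ⟨n + 1, by omega⟩ := by rw [hE]; simp
                rw [this, hlast]; simp
            _ = ∑ j ∈ Finset.range (n + 1),
                  (if 1 ≤ j + 1 then ((n + 2 - (j + 1) : ℕ) : ℝ) * D j else 0) • E (j + 1) := by
                refine Finset.sum_congr rfl (fun j hj => ?_)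
                have hjn : j ≤ n := by
                  have := Finset.mem_range.mp hj; omega
                rcases Nat.eq_zero_or_pos j with hj0 | hjpos
                · subst hj0
                  have hD0 : D 0 = 0 := by
                    rw [hD]; simp only [dif_pos (by omega : (0:ℕ) < n + 2)]
                    exact hd0 _ (by simpa using hmpos)
                  rw [hD0]; simp
                · have hEj : E j = e ⟨j, by omega⟩ := by rw [hE]; simp [(by omega : j < n + 2)]
                  have hEj1 : E (j + 1) = e ⟨j + 1, by omega⟩ := by
                    rw [hE]; simp [(by omega : j + 1 < n + 2)]
                  rw [hEj, hEj1, hbr ⟨j, by omega⟩ (by exact hjpos) (by simpa using hjn)]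
                  rw [if_pos (by omega)]
                  have hco : ((n + 1 - j : ℕ) : ℝ) = ((n + 2 - (j + 1) : ℕ) : ℝ) := by
                    congr 1; omega
                  rw [smul_smul, hco, mul_comm]
            _ = ∑ i ∈ Finset.range (n + 2),
                  (if 1 ≤ i then ((n + 2 - i : ℕ) : ℝ) * D (i - 1) else 0) • E i := by
                rw [Finset.sum_range_succ' (fun i =>
                  (if 1 ≤ i then ((n + 2 - i : ℕ) : ℝ) * D (i - 1) else 0) • E i) (n + 1)]
                simp
            _ = ∑ i : Fin (n + 2), d' i • E (i : ℕ) := by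
                rw [Fin.sum_univ_eq_sum_range (fun i =>
                  (if 1 ≤ i then ((n + 2 - i : ℕ) : ℝ) * D (i - 1) else 0) • E i) (n + 2)]
            _ = ∑ i : Fin (n + 2), d' i • e i :=
                Finset.sum_congr rfl (fun i _ => (hR i).symm)
        refine ⟨d', ?_, ?_, hcalc ▸ hbrv⟩
        · intro i hi
          simp only [hd']
          rcases Nat.eq_zero_or_pos (i : ℕ) with hi0 | hipos
          · rw [if_neg (by omega)]
          · rw [if_pos (by omega : 1 ≤ (i : ℕ))]
            have : D ((i : ℕ) - 1) = 0 := by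
              simp only [hD]
              have h2 : (i : ℕ) - 1 < n + 2 := by omega
              rw [dif_pos h2]
              exact hd0 _ (by simp only [Fin.val_mk]; omega)
            rw [this, mul_zero]
        · simp only [hd', Fin.val_mk]
          rw [if_pos (by omega)]
          have hDm : D (m + 1 - 1) = d ⟨m, by omega⟩ := by
            simp only [hD, Nat.add_sub_cancel]
            rw [dif_pos (by omega : m < n + 2)]
          rw [hDm]
          apply mul_ne_zero _ hdm
          exact Nat.cast_ne_zero.mpr (by omega)
  -- Step 2: extraction lemma
  have extract : ∀ k : ℕ, ∀ _h1 : 1 ≤ k, ∀ _h2 : k ≤ n + 1,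
      (∀ i : Fin (n + 2), k < (i : ℕ) → e i ∈ S) → e ⟨k, by omega⟩ ∈ S := by
    intro k hk1 hk2 hhi
    obtain ⟨d, hd0, hdk, hdS⟩ := key k hk1 hk2
    have hsplit : (∑ j : Fin (n + 2), d j • e j) =
        d ⟨k, by omega⟩ • e ⟨k, by omega⟩ +
          ∑ j : Fin (n + 2), (if k < (j : ℕ) then d j • e j else 0) := by
      have h1 : (∑ j : Fin (n + 2), d j • e j) =
          ∑ j : Fin (n + 2), ((if j = ⟨k, by omega⟩ then d j • e j else 0) +
            (if k < (j : ℕ) then d j • e j else 0)) := by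
        refine Finset.sum_congr rfl (fun j _ => ?_)
        rcases lt_trichotomy (j : ℕ) k with h | h | h
        · rw [hd0 j h]
          rw [if_neg (by intro hjk; rw [hjk] at h; simp at h),
            if_neg (by omega)]
          simp
        · have : j = ⟨k, by omega⟩ := by apply Fin.ext; simpa using h
          rw [if_pos this, if_neg (by omega)]
          simp
        · rw [if_neg (by intro hjk; rw [hjk] at h; simp at h), if_pos h]
          simp
      rw [h1, Finset.sum_add_distrib]
      congr 1
      rw [Finset.sum_ite_eq' Finset.univ (⟨k, by omega⟩ : Fin (n + 2))
        (fun j => d j • e j)]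
      simp
    have hrest : (∑ j : Fin (n + 2), (if k < (j : ℕ) then d j • e j else 0)) ∈ S := by
      apply sum_mem
      intro j _
      split
      · exact S.smul_mem _ (hhi j (by assumption))
      · exact S.zero_mem
    have hmem : d ⟨k, by omega⟩ • e ⟨k, by omega⟩ ∈ S := by
      have : d ⟨k, by omega⟩ • e ⟨k, by omega⟩ =
          (∑ j : Fin (n + 2), d j • e j) -
            ∑ j : Fin (n + 2), (if k < (j : ℕ) then d j • e j else 0) := by
        rw [hsplit]; abel
      rw [this]
      exact S.sub_mem hdS hrest
    have := S.smul_mem (d ⟨k, by omega⟩)⁻¹ hmem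
    rwa [inv_smul_smul₀ hdk] at this
  -- Step 3: downward induction
  have desc : ∀ t : ℕ, t ≤ n → ∀ i : Fin (n + 2), n + 1 - t ≤ (i : ℕ) → e i ∈ S := by
    intro t
    induction t with
    | zero =>
      intro _ i hi
      have hiv : (i : ℕ) = n + 1 := by have := i.isLt; omega
      have : i = ⟨n + 1, by omega⟩ := by apply Fin.ext; simpa using hiv
      rw [this]
      exact extract (n + 1) (by omega) le_rfl
        (fun i' hi' => absurd i'.isLt (by omega))
    | succ t iht =>
      intro ht i hi
      rcases Nat.lt_or_ge (i : ℕ) (n + 1 - t) with h | h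
      · have hiv : (i : ℕ) = n - t := by omega
        have : i = ⟨n - t, by omega⟩ := by apply Fin.ext; simpa using hiv
        rw [this]
        exact extract (n - t) (by omega) (by omega)
          (fun i' hi' => iht (by omega) i' (by omega))
      · exact iht (by omega) i h
  -- Step 4: conclude
  have hall : ∀ i : Fin (n + 2), e i ∈ S := by
    intro i
    rcases Nat.eq_zero_or_pos (i : ℕ) with h | h
    · have : i = 0 := by apply Fin.ext; simpa using h
      rw [this]; exact he0
    · exact desc n le_rfl i (by omega)
  have hle : Submodule.span ℝ (Set.range e) ≤ S.toSubmodule :=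
    Submodule.span_le.mpr (by rintro _ ⟨i, rfl⟩; exact hall i)
  rw [eq_top_iff]
  intro x _
  have hx : x ∈ Submodule.span ℝ (Set.range e) := by rw [hspan]; trivial
  exact hle hx
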